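/- Under the definitions of W^k_{ij} (degrees of opportunism) and Ŵ^r_{ij} (search depths) for nonnegative reals T_{ij}, the sandwich chain holds: max_{i≤M} Σ_{j≤N} T_{ij} = Ŵ^0_N ≤ Ŵ^1_N ≤ ... ≤ Ŵ^M_N = W_N = W^1_N ≤ W^2_N ≤ ... ≤ W^M_N = Σ_{j≤N} max_{i≤M} T_{ij}. -/

import Mathlib

open Finset

/-- 1-opportunistic waiting time recursion. -/
noncomputable def oppW (T : ℕ → ℕ → NNReal) : ℕ → ℕ → NNReal
  | _, 0 => 0
  | i, j + 1 => (Finset.Icc 1 i).sup fun k => oppW T k j + T k (j + 1)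
termination_by i j => j

/-- k-opportunistic waiting time recursion. -/
noncomputable def oppWk (T : ℕ → ℕ → NNReal) (M k : ℕ) : ℕ → ℕ → NNReal
  | _, 0 => 0
  | i, j + 1 => (Finset.Icc 1 (min (i + k - 1) M)).sup fun m => oppWk T M k m j + T m (j + 1)
termination_by i j => j

/-- Search-depth-r waiting time recursion. -/
noncomputable def oppWh (T : ℕ → ℕ → NNReal) (r : ℕ) : ℕ → ℕ → NNReal
  | _, 0 => 0
  | i, j + 1 => (Finset.Icc (max 1 (i - r)) i).sup fun m => oppWh T r m j + T m (j + 1)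
termination_by i j => j

lemma sup_const_add {s : Finset ℕ} (hs : s.Nonempty) (c : NNReal) (f : ℕ → NNReal) :
    s.sup (fun m => c + f m) = c + s.sup f := by
  apply le_antisymm
  · exact Finset.sup_le fun m hm => add_le_add_right (Finset.le_sup hm) c
  · obtain ⟨b, hb, hbe⟩ := Finset.exists_mem_eq_sup s hs f
    rw [hbe]
    exact Finset.le_sup (f := fun m => c + f m) hb

lemma oppWh_zero (T : ℕ → ℕ → NNReal) :
    ∀ j i, 1 ≤ i → oppWh T 0 i j = ∑ l ∈ Finset.Icc 1 j, T i l := by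
  intro j
  induction j with
  | zero => intro i hi; simp [oppWh]
  | succ j ih =>
    intro i hi
    rw [oppWh]
    have h1 : max 1 (i - 0) = i := by omega
    rw [h1, Finset.Icc_self, Finset.sup_singleton, ih i hi,
      Finset.sum_Icc_succ_top (by omega : 1 ≤ j + 1)]

lemma oppWh_mono_r (T : ℕ → ℕ → NNReal) (r : ℕ) :
    ∀ j i, oppWh T r i j ≤ oppWh T (r + 1) i j := by
  intro j
  induction j with
  | zero => intro i; simp [oppWh]
  | succ j ih =>
    intro i
    rw [oppWh, oppWh]
    apply Finset.sup_le
    intro m hm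
    have hm' : m ∈ Finset.Icc (max 1 (i - (r + 1))) i := by
      simp only [Finset.mem_Icc] at hm ⊢; omega
    exact le_trans (add_le_add_left (ih m) _)
      (Finset.le_sup (f := fun m => oppWh T (r + 1) m j + T m (j + 1)) hm')

lemma oppWh_top (T : ℕ → ℕ → NNReal) (M : ℕ) :
    ∀ j i, i ≤ M → oppWh T M i j = oppW T i j := by
  intro j
  induction j with
  | zero => intro i _; simp [oppWh, oppW]
  | succ j ih =>
    intro i hi
    rw [oppWh, oppW]
    have h1 : max 1 (i - M) = 1 := by omega
    rw [h1]
    apply Finset.sup_congr rfl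
    intro m hm
    simp only [Finset.mem_Icc] at hm
    rw [ih m (le_trans hm.2 hi)]

lemma oppW_mono (T : ℕ → ℕ → NNReal) :
    ∀ j i i', i ≤ i' → oppW T i j ≤ oppW T i' j := by
  intro j
  cases j with
  | zero => intro i i' _; simp [oppW]
  | succ j =>
    intro i i' h
    rw [oppW, oppW]
    exact Finset.sup_mono (Finset.Icc_subset_Icc_right h)

lemma oppWk_one (T : ℕ → ℕ → NNReal) (M : ℕ) :
    ∀ j i, i ≤ M → oppWk T M 1 i j = oppW T i j := by
  intro j
  induction j with
  | zero => intro i _; simp [oppWk, oppW]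
  | succ j ih =>
    intro i hi
    rw [oppWk, oppW]
    have h1 : min (i + 1 - 1) M = i := by omega
    rw [h1]
    apply Finset.sup_congr rfl
    intro m hm
    simp only [Finset.mem_Icc] at hm
    rw [ih m (le_trans hm.2 hi)]

lemma oppWk_mono_k (T : ℕ → ℕ → NNReal) (M k : ℕ) :
    ∀ j i, oppWk T M k i j ≤ oppWk T M (k + 1) i j := by
  intro j
  induction j with
  | zero => intro i; simp [oppWk]
  | succ j ih =>
    intro i
    rw [oppWk, oppWk]
    apply Finset.sup_le
    intro m hm
    have hm' : m ∈ Finset.Icc 1 (min (i + (k + 1) - 1) M) := by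
      simp only [Finset.mem_Icc] at hm ⊢; omega
    exact le_trans (add_le_add_left (ih m) _)
      (Finset.le_sup (f := fun m => oppWk T M (k + 1) m j + T m (j + 1)) hm')

lemma oppWk_top (T : ℕ → ℕ → NNReal) (M : ℕ) (hM : 1 ≤ M) :
    ∀ j i, 1 ≤ i →
      oppWk T M M i j = ∑ l ∈ Finset.Icc 1 j, (Finset.Icc 1 M).sup fun m => T m l := by
  intro j
  induction j with
  | zero => intro i _; simp [oppWk]
  | succ j ih =>
    intro i hi
    rw [oppWk]
    have h1 : min (i + M - 1) M = M := by omega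
    rw [h1]
    have h2 : ((Finset.Icc 1 M).sup fun m => oppWk T M M m j + T m (j + 1))
        = (Finset.Icc 1 M).sup fun m =>
            (∑ l ∈ Finset.Icc 1 j, (Finset.Icc 1 M).sup fun m' => T m' l) + T m (j + 1) := by
      apply Finset.sup_congr rfl
      intro m hm
      simp only [Finset.mem_Icc] at hm
      rw [ih m hm.1]
    rw [h2, sup_const_add ⟨1, Finset.mem_Icc.mpr ⟨le_refl 1, hM⟩⟩,
      Finset.sum_Icc_succ_top (by omega : 1 ≤ j + 1)]

/-- The sandwich chain: `max_{i≤M} ∑_{j≤N} T_{ij} = Ŵ^0_N ≤ Ŵ^1_N ≤ ⋯ ≤ Ŵ^M_N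
= W_N = W^1_N ≤ W^2_N ≤ ⋯ ≤ W^M_N = ∑_{j≤N} max_{i≤M} T_{ij}`, where
`Ŵ^r_N = max_{i≤M} Ŵ^r_{iN}` and `W^k_N = W^k_{MN}`. -/
theorem sandwich_chain (M N : ℕ) (hM : 1 ≤ M) (hN : 1 ≤ N) (T : ℕ → ℕ → NNReal) :
    ((Finset.Icc 1 M).sup fun i => ∑ j ∈ Finset.Icc 1 N, T i j)
        = ((Finset.Icc 1 M).sup fun i => oppWh T 0 i N)
    ∧ (∀ r, r < M →
        ((Finset.Icc 1 M).sup fun i => oppWh T r i N)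
          ≤ (Finset.Icc 1 M).sup fun i => oppWh T (r + 1) i N)
    ∧ ((Finset.Icc 1 M).sup fun i => oppWh T M i N) = oppW T M N
    ∧ oppW T M N = oppWk T M 1 M N
    ∧ (∀ k, 1 ≤ k → k < M → oppWk T M k M N ≤ oppWk T M (k + 1) M N)
    ∧ oppWk T M M M N = ∑ j ∈ Finset.Icc 1 N, (Finset.Icc 1 M).sup fun i => T i j := by
  have hMmem : M ∈ Finset.Icc 1 M := Finset.mem_Icc.mpr ⟨hM, le_refl M⟩
  refine ⟨?_, ?_, ?_, ?_, ?_, ?_⟩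
  · apply Finset.sup_congr rfl
    intro i hi
    simp only [Finset.mem_Icc] at hi
    rw [oppWh_zero T N i hi.1]
  · intro r _
    exact Finset.sup_mono_fun fun i _ => oppWh_mono_r T r N i
  · have h : ((Finset.Icc 1 M).sup fun i => oppWh T M i N)
        = (Finset.Icc 1 M).sup fun i => oppW T i N := by
      apply Finset.sup_congr rfl
      intro i hi
      simp only [Finset.mem_Icc] at hi
      rw [oppWh_top T M N i hi.2]
    rw [h]
    apply le_antisymm
    · exact Finset.sup_le fun i hi =>
        oppW_mono T N i M (Finset.mem_Icc.mp hi).2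
    · exact Finset.le_sup (f := fun i => oppW T i N) hMmem
  · exact (oppWk_one T M N M (le_refl M)).symm
  · intro k _ _
    exact oppWk_mono_k T M k N M
  · exact oppWk_top T M hM N M hM
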